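/- Let α₁ = (3+√13)/2 and α₂ = (3−√13)/2. For every integer l ≥ 1, the real number (α₁^l − 1)(α₂^l − 1) is an integer divisible by 3, and its absolute value is greater than 1. -/
import Mathlib

/-- The Lucas-like sequence `S n = α₁^n + α₂^n`. -/
def Sseq : ℕ → ℤ
  | 0 => 2
  | 1 => 3
  | (n + 2) => 3 * Sseq (n + 1) + Sseq n

lemma Sseq_pair (α₁ α₂ : ℝ) (h₁ : α₁ = (3 + Real.sqrt 13) / 2)
    (h₂ : α₂ = (3 - Real.sqrt 13) / 2) :
    ∀ n : ℕ, (α₁ ^ n + α₂ ^ n = (Sseq n : ℝ)) ∧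
      (α₁ ^ (n + 1) + α₂ ^ (n + 1) = (Sseq (n + 1) : ℝ)) := by
  have h13 : Real.sqrt 13 ^ 2 = 13 := Real.sq_sqrt (by norm_num)
  have hsum : α₁ + α₂ = 3 := by rw [h₁, h₂]; ring
  have hq₁ : α₁ ^ 2 = 3 * α₁ + 1 := by rw [h₁]; ring_nf; nlinarith [h13]
  have hq₂ : α₂ ^ 2 = 3 * α₂ + 1 := by rw [h₂]; ring_nf; nlinarith [h13]
  intro n
  induction n with
  | zero =>
    constructor
    · norm_num [Sseq]
    · simpa [Sseq] using hsum
  | succ n ih =>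
    refine ⟨ih.2, ?_⟩
    have e1 : α₁ ^ (n + 2) = 3 * α₁ ^ (n + 1) + α₁ ^ n := by
      have : α₁ ^ (n + 2) = α₁ ^ n * α₁ ^ 2 := by ring
      rw [this, hq₁]; ring
    have e2 : α₂ ^ (n + 2) = 3 * α₂ ^ (n + 1) + α₂ ^ n := by
      have : α₂ ^ (n + 2) = α₂ ^ n * α₂ ^ 2 := by ring
      rw [this, hq₂]; ring
    have : Sseq (n + 2) = 3 * Sseq (n + 1) + Sseq n := rfl
    rw [e1, e2, this]
    push_cast
    linarith [ih.1, ih.2]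

lemma Sseq_dvd : ∀ n : ℕ, (3 : ℤ) ∣ ((-1) ^ n + 1 - Sseq n) ∧
    (3 : ℤ) ∣ ((-1) ^ (n + 1) + 1 - Sseq (n + 1)) := by
  intro n
  induction n with
  | zero => exact ⟨by simp [Sseq], by simp [Sseq]⟩
  | succ n ih =>
    refine ⟨ih.2, ?_⟩
    have : ((-1 : ℤ)) ^ (n + 2) + 1 - Sseq (n + 2)
        = ((-1) ^ n + 1 - Sseq n) - 3 * Sseq (n + 1) := by
      show ((-1 : ℤ)) ^ (n + 2) + 1 - (3 * Sseq (n + 1) + Sseq n) = _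
      ring
    rw [this]
    exact dvd_sub ih.1 ⟨Sseq (n + 1), rfl⟩

lemma Sseq_ge : ∀ n : ℕ, (2 : ℤ) ^ n ≤ Sseq n ∧ (2 : ℤ) ^ (n + 1) ≤ Sseq (n + 1) := by
  intro n
  induction n with
  | zero => exact ⟨by norm_num [Sseq], by norm_num [Sseq]⟩
  | succ n ih =>
    refine ⟨ih.2, ?_⟩
    have h0 : (0 : ℤ) < 2 ^ n := by positivity
    have : Sseq (n + 2) = 3 * Sseq (n + 1) + Sseq n := rfl
    rw [this]
    have := ih.1; have := ih.2
    calc (2 : ℤ) ^ (n + 2) = 2 * 2 ^ (n + 1) := by ring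
      _ ≤ 3 * Sseq (n + 1) + Sseq n := by
          have h1 : (0 : ℤ) < 2 ^ (n + 1) := by positivity
          linarith

/-- Let `α₁ = (3+√13)/2` and `α₂ = (3−√13)/2`.  For every integer `l ≥ 1`, the
real number `(α₁^l − 1)(α₂^l − 1)` is an integer divisible by `3` whose
absolute value is greater than `1`. -/
theorem norm_of_power_sub_one
    (α₁ α₂ : ℝ) (h₁ : α₁ = (3 + Real.sqrt 13) / 2) (h₂ : α₂ = (3 - Real.sqrt 13) / 2)
    (l : ℕ) (hl : 1 ≤ l) :
    ∃ m : ℤ, (α₁ ^ l - 1) * (α₂ ^ l - 1) = (m : ℝ) ∧ (3 : ℤ) ∣ m ∧ 1 < |m| := by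
  have h13 : Real.sqrt 13 ^ 2 = 13 := Real.sq_sqrt (by norm_num)
  have hprod : α₁ * α₂ = -1 := by rw [h₁, h₂]; nlinarith [h13]
  refine ⟨(-1) ^ l + 1 - Sseq l, ?_, (Sseq_dvd l).1, ?_⟩
  · have hS := (Sseq_pair α₁ α₂ h₁ h₂ l).1
    have : (α₁ ^ l - 1) * (α₂ ^ l - 1)
        = (α₁ * α₂) ^ l - (α₁ ^ l + α₂ ^ l) + 1 := by ring
    rw [this, hprod, hS]
    push_cast
    ring
  · have hge := (Sseq_ge l).1
    have h2 : (2 : ℤ) ^ 1 ≤ 2 ^ l := pow_le_pow_right₀ (by norm_num) hl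
    rcases Nat.even_or_odd l with he | ho
    · rcases he with ⟨k, hk⟩
      have hl2 : 2 ≤ l := by omega
      have h4 : (2 : ℤ) ^ 2 ≤ 2 ^ l := pow_le_pow_right₀ (by norm_num) hl2
      have : ((-1 : ℤ)) ^ l = 1 := by
        rw [hk]; simpa using (neg_one_pow_two_mul_eq ℤ k ▸ rfl : ((-1:ℤ))^(2*k) = 1)
      rw [this]
      rw [abs_sub_comm]
      have : 1 < Sseq l - (1 + 1) := by omega
      rw [abs_of_pos (by omega)]
      omega
    · have : ((-1 : ℤ)) ^ l = -1 := ho.neg_one_pow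
      rw [this]
      have : (2 : ℤ) ≤ Sseq l := le_trans (by simpa using h2) hge
      rw [abs_sub_comm]
      rw [abs_of_pos (by omega)]
      omega
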